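/- Define κ₁(P₁) = 1 − a₂(P₁)·γ(h₂P) and κ₂(P₁) = a₁(P₁)·γ(h₁P). Then for h₁ > h₂ > 0 and P > 0, κ₁ and κ₂ are strictly increasing on [0,P], κ₁(P₁) ∈ [0,1) and κ₂(P₁) ∈ (0,1] for all P₁ ∈ [0,P]. -/

import Mathlib

noncomputable def γ (x : ℝ) : ℝ := Real.logb 2 (1 + x) / 2


lemma hasDerivAt_gam {h x : ℝ} (hx : 0 < 1 + h * x) :
    HasDerivAt (fun t => γ (h * t)) (h / (2 * Real.log 2 * (1 + h * x))) x := by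
  have hL : (0:ℝ) < Real.log 2 := Real.log_pos one_lt_two
  have h1 : HasDerivAt (fun t : ℝ => 1 + h * t) h x := by
    simpa using ((hasDerivAt_id x).const_mul h).const_add 1
  have h2 : HasDerivAt (fun t => Real.log (1 + h * t)) ((1 + h * x)⁻¹ * h) x := by
    exact (Real.hasDerivAt_log (ne_of_gt hx)).comp x h1
  have h3 := (h2.div_const (Real.log 2)).div_const 2
  have he : (fun t => γ (h * t)) = fun t => Real.log (1 + h * t) / Real.log 2 / 2 := by
    funext t; simp [γ, Real.logb]
  rw [he]
  refine h3.congr_deriv ?_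
  rw [inv_mul_eq_div, div_div, div_div]
  ring

lemma gam_nonneg {y : ℝ} (hy : 0 ≤ y) : 0 ≤ γ y :=
  div_nonneg (Real.logb_nonneg one_lt_two (by linarith)) (by norm_num)

lemma gam_pos {y : ℝ} (hy : 0 < y) : 0 < γ y :=
  div_pos (Real.logb_pos one_lt_two (by linarith)) (by norm_num)

lemma gam_lt {y z : ℝ} (hy : 0 ≤ y) (hyz : y < z) : γ y < γ z := by
  have := Real.logb_lt_logb (b := 2) one_lt_two (by linarith : (0:ℝ) < 1 + y)
    (by linarith : 1 + y < 1 + z)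
  unfold γ; linarith

noncomputable def Dden (h₁ h₂ P : ℝ) : ℝ → ℝ :=
  fun t => γ (h₂ * P) - γ (h₂ * t) + (1 / h₁ + t) / (1 / h₂ + t) * γ (h₁ * t)

lemma gfun_pos (hh₂ : 0 < h₂) (hh₁ : 0 < h₁) {x : ℝ} (hx : 0 ≤ x) :
    0 < (1 / h₁ + x) / (1 / h₂ + x) :=
  div_pos (add_pos_of_pos_of_nonneg (by positivity) hx)
    (add_pos_of_pos_of_nonneg (by positivity) hx)

lemma Dden_pos {h₁ h₂ P : ℝ} (hh : h₂ < h₁) (hh₂ : 0 < h₂) (hP : 0 < P) {x : ℝ} (hx : 0 ≤ x) (hxP : x ≤ P) :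
    0 < Dden h₁ h₂ P x := by
  have hh₁ : 0 < h₁ := hh₂.trans hh
  have hg := gfun_pos hh₂ hh₁ hx
  rcases lt_or_eq_of_le hxP with h | h
  · have h1 : γ (h₂ * x) < γ (h₂ * P) := gam_lt (mul_nonneg hh₂.le hx) (by nlinarith)
    have h2 : 0 ≤ (1 / h₁ + x) / (1 / h₂ + x) * γ (h₁ * x) :=
      mul_nonneg hg.le (gam_nonneg (mul_nonneg hh₁.le hx))
    unfold Dden; linarith
  · subst h
    have h2 : 0 < (1 / h₁ + x) / (1 / h₂ + x) * γ (h₁ * x) :=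
      mul_pos hg (gam_pos (by positivity))
    unfold Dden; linarith

lemma gfun_hasDeriv (hh₂ : 0 < h₂) (hh₁ : 0 < h₁) {x : ℝ} (hx : 0 ≤ x) :
    HasDerivAt (fun t : ℝ => (1 / h₁ + t) / (1 / h₂ + t))
      ((1 / h₂ - 1 / h₁) / (1 / h₂ + x) ^ 2) x := by
  have hden : (1 / h₂ + x) ≠ 0 := (add_pos_of_pos_of_nonneg (by positivity) hx).ne'
  have h1 : HasDerivAt (fun t : ℝ => 1 / h₁ + t) 1 x := (hasDerivAt_id x).const_add _
  have h2 : HasDerivAt (fun t : ℝ => 1 / h₂ + t) 1 x := (hasDerivAt_id x).const_add _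
  have heq : (1 / h₂ - 1 / h₁) / (1 / h₂ + x) ^ 2
      = (1 * (1 / h₂ + x) - (1 / h₁ + x) * 1) / (1 / h₂ + x) ^ 2 := by ring
  rw [heq]
  exact h1.div h2 hden

lemma Dden_hasDeriv {h₁ h₂ P : ℝ} (hh : h₂ < h₁) (hh₂ : 0 < h₂) {x : ℝ} (hx : 0 ≤ x) :
    HasDerivAt (Dden h₁ h₂ P)
      ((1 / h₂ - 1 / h₁) / (1 / h₂ + x) ^ 2 * γ (h₁ * x)) x := by
  have hh₁ : 0 < h₁ := hh₂.trans hh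
  have hL : (0:ℝ) < Real.log 2 := Real.log_pos one_lt_two
  have p1 : 0 < 1 + h₁ * x := by nlinarith
  have p2 : 0 < 1 + h₂ * x := by nlinarith
  have d1 := hasDerivAt_gam (h := h₁) p1
  have d2 := hasDerivAt_gam (h := h₂) p2
  have dg := gfun_hasDeriv hh₂ hh₁ hx
  have dD := (d2.const_sub (γ (h₂ * P))).add (dg.mul d1)
  have key : (1 / h₁ + x) / (1 / h₂ + x) * (h₁ / (2 * Real.log 2 * (1 + h₁ * x)))
      = h₂ / (2 * Real.log 2 * (1 + h₂ * x)) := by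
    have e1 : (1 / h₂ + x) ≠ 0 := (add_pos_of_pos_of_nonneg (by positivity) hx).ne'
    field_simp
  have heq : (1 / h₂ - 1 / h₁) / (1 / h₂ + x) ^ 2 * γ (h₁ * x)
      = -(h₂ / (2 * Real.log 2 * (1 + h₂ * x)))
        + ((1 / h₂ - 1 / h₁) / (1 / h₂ + x) ^ 2 * γ (h₁ * x)
          + (1 / h₁ + x) / (1 / h₂ + x) * (h₁ / (2 * Real.log 2 * (1 + h₁ * x)))) := by
    rw [key]; ring
  rw [heq]
  exact dD


lemma k1_hasDeriv {h₁ h₂ P : ℝ} (hh : h₂ < h₁) (hh₂ : 0 < h₂) (hP : 0 < P) {x : ℝ}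
    (hx : 0 ≤ x) (hxP : x ≤ P) :
    HasDerivAt (fun t => 1 - 1 / Dden h₁ h₂ P t * γ (h₂ * P))
      (γ (h₂ * P) * ((1 / h₂ - 1 / h₁) / (1 / h₂ + x) ^ 2 * γ (h₁ * x))
        / (Dden h₁ h₂ P x) ^ 2) x := by
  have hDne := (Dden_pos hh hh₂ hP hx hxP).ne'
  have h0 := (((hasDerivAt_const x (1:ℝ)).div (Dden_hasDeriv hh hh₂ hx) hDne).mul_const
    (γ (h₂ * P))).const_sub 1
  have heq : γ (h₂ * P) * ((1 / h₂ - 1 / h₁) / (1 / h₂ + x) ^ 2 * γ (h₁ * x))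
        / (Dden h₁ h₂ P x) ^ 2
      = -((0 * Dden h₁ h₂ P x - 1 * ((1 / h₂ - 1 / h₁) / (1 / h₂ + x) ^ 2 * γ (h₁ * x)))
          / (Dden h₁ h₂ P x) ^ 2 * γ (h₂ * P)) := by ring
  rw [heq]
  exact h0

lemma k2_hasDeriv {h₁ h₂ P : ℝ} (hh : h₂ < h₁) (hh₂ : 0 < h₂) (hP : 0 < P) {x : ℝ}
    (hx : 0 ≤ x) (hxP : x ≤ P) :
    HasDerivAt (fun t => (1 / h₁ + t) / (1 / h₂ + t) / Dden h₁ h₂ P t * γ (h₁ * P))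
      ((1 / h₂ - 1 / h₁) / (1 / h₂ + x) ^ 2 * (γ (h₂ * P) - γ (h₂ * x))
        / (Dden h₁ h₂ P x) ^ 2 * γ (h₁ * P)) x := by
  have hh₁ : 0 < h₁ := hh₂.trans hh
  have hDne := (Dden_pos hh hh₂ hP hx hxP).ne'
  have h0 := ((gfun_hasDeriv hh₂ hh₁ hx).div (Dden_hasDeriv hh hh₂ hx) hDne).mul_const
    (γ (h₁ * P))
  have heq : (1 / h₂ - 1 / h₁) / (1 / h₂ + x) ^ 2 * (γ (h₂ * P) - γ (h₂ * x))
        / (Dden h₁ h₂ P x) ^ 2 * γ (h₁ * P)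
      = ((1 / h₂ - 1 / h₁) / (1 / h₂ + x) ^ 2 * Dden h₁ h₂ P x
          - (1 / h₁ + x) / (1 / h₂ + x)
            * ((1 / h₂ - 1 / h₁) / (1 / h₂ + x) ^ 2 * γ (h₁ * x)))
          / (Dden h₁ h₂ P x) ^ 2 * γ (h₁ * P) := by
    simp only [Dden]; ring
  rw [heq]
  exact h0

lemma k1_mono {h₁ h₂ P : ℝ} (hh : h₂ < h₁) (hh₂ : 0 < h₂) (hP : 0 < P) :
    StrictMonoOn (fun t => 1 - 1 / Dden h₁ h₂ P t * γ (h₂ * P)) (Set.Icc 0 P) := by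
  have hh₁ : 0 < h₁ := hh₂.trans hh
  apply strictMonoOn_of_deriv_pos (convex_Icc 0 P)
  · exact fun x hx => (k1_hasDeriv hh hh₂ hP hx.1 hx.2).continuousAt.continuousWithinAt
  · intro x hx
    rw [interior_Icc] at hx
    rw [(k1_hasDeriv hh hh₂ hP hx.1.le hx.2.le).deriv]
    have hD := Dden_pos hh hh₂ hP hx.1.le hx.2.le
    have h1 : 0 < γ (h₂ * P) := gam_pos (mul_pos hh₂ hP)
    have h2 : 0 < (1 / h₂ - 1 / h₁) / (1 / h₂ + x) ^ 2 := by
      apply div_pos _ (pow_pos (add_pos (by positivity) hx.1) 2)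
      rw [sub_pos]
      exact one_div_lt_one_div_of_lt hh₂ hh
    have h3 : 0 < γ (h₁ * x) := gam_pos (mul_pos hh₁ hx.1)
    exact div_pos (mul_pos h1 (mul_pos h2 h3)) (pow_pos hD 2)

lemma k2_mono {h₁ h₂ P : ℝ} (hh : h₂ < h₁) (hh₂ : 0 < h₂) (hP : 0 < P) :
    StrictMonoOn (fun t => (1 / h₁ + t) / (1 / h₂ + t) / Dden h₁ h₂ P t * γ (h₁ * P))
      (Set.Icc 0 P) := by
  have hh₁ : 0 < h₁ := hh₂.trans hh
  apply strictMonoOn_of_deriv_pos (convex_Icc 0 P)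
  · exact fun x hx => (k2_hasDeriv hh hh₂ hP hx.1 hx.2).continuousAt.continuousWithinAt
  · intro x hx
    rw [interior_Icc] at hx
    rw [(k2_hasDeriv hh hh₂ hP hx.1.le hx.2.le).deriv]
    have hD := Dden_pos hh hh₂ hP hx.1.le hx.2.le
    have h1 : 0 < γ (h₁ * P) := gam_pos (mul_pos hh₁ hP)
    have h2 : 0 < (1 / h₂ - 1 / h₁) / (1 / h₂ + x) ^ 2 := by
      apply div_pos _ (pow_pos (add_pos (by positivity) hx.1) 2)
      rw [sub_pos]
      exact one_div_lt_one_div_of_lt hh₂ hh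
    have h3 : 0 < γ (h₂ * P) - γ (h₂ * x) := by
      rw [sub_pos]
      exact gam_lt (mul_nonneg hh₂.le hx.1.le) (by nlinarith [hx.2])
    exact mul_pos (div_pos (mul_pos h2 h3) (pow_pos hD 2)) h1

lemma Dden_zero {h₁ h₂ P : ℝ} : Dden h₁ h₂ P 0 = γ (h₂ * P) := by
  simp [Dden, γ]

lemma Dden_self {h₁ h₂ P : ℝ} :
    Dden h₁ h₂ P P = (1 / h₁ + P) / (1 / h₂ + P) * γ (h₁ * P) := by
  simp [Dden]

theorem gbc_kappa_props (h₁ h₂ P : ℝ)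
    (hh : h₂ < h₁) (hh₂ : 0 < h₂) (hP : 0 < P) :
    let g : ℝ → ℝ := fun P₁ => (1 / h₁ + P₁) / (1 / h₂ + P₁)
    let r₁ : ℝ → ℝ := fun P₁ => γ (h₁ * P₁)
    let r₂ : ℝ → ℝ := fun P₁ => γ (h₂ * P) - γ (h₂ * P₁)
    let a₁ : ℝ → ℝ := fun P₁ => g P₁ / (r₂ P₁ + g P₁ * r₁ P₁)
    let a₂ : ℝ → ℝ := fun P₁ => 1 / (r₂ P₁ + g P₁ * r₁ P₁)
    let κ₁ : ℝ → ℝ := fun P₁ => 1 - a₂ P₁ * γ (h₂ * P)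
    let κ₂ : ℝ → ℝ := fun P₁ => a₁ P₁ * γ (h₁ * P)
    StrictMonoOn κ₁ (Set.Icc 0 P) ∧ StrictMonoOn κ₂ (Set.Icc 0 P) ∧
    ∀ P₁ ∈ Set.Icc (0 : ℝ) P,
      κ₁ P₁ ∈ Set.Ico (0 : ℝ) 1 ∧ κ₂ P₁ ∈ Set.Ioc (0 : ℝ) 1 := by
  intro g r₁ r₂ a₁ a₂ κ₁ κ₂
  have hh₁ : 0 < h₁ := hh₂.trans hh
  have e₁ : κ₁ = fun t => 1 - 1 / Dden h₁ h₂ P t * γ (h₂ * P) := rfl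
  have e₂ : κ₂ = fun t => (1 / h₁ + t) / (1 / h₂ + t) / Dden h₁ h₂ P t * γ (h₁ * P) := rfl
  rw [e₁, e₂]
  refine ⟨k1_mono hh hh₂ hP, k2_mono hh hh₂ hP, ?_⟩
  intro x hx
  have hC₂ : 0 < γ (h₂ * P) := gam_pos (mul_pos hh₂ hP)
  have hC₁ : 0 < γ (h₁ * P) := gam_pos (mul_pos hh₁ hP)
  have hD := Dden_pos hh hh₂ hP hx.1 hx.2
  have hk10 : 1 - 1 / Dden h₁ h₂ P 0 * γ (h₂ * P) = 0 := by
    rw [Dden_zero, one_div, inv_mul_cancel₀ hC₂.ne', sub_self]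
  have hgP : (0:ℝ) < (1 / h₁ + P) / (1 / h₂ + P) := gfun_pos hh₂ hh₁ hP.le
  have hk2P : (1 / h₁ + P) / (1 / h₂ + P) / Dden h₁ h₂ P P * γ (h₁ * P) = 1 := by
    rw [Dden_self]
    have hγ : γ (h₁ * P) ≠ 0 := hC₁.ne'
    field_simp
  refine ⟨⟨?_, ?_⟩, ?_, ?_⟩
  · show (0:ℝ) ≤ 1 - 1 / Dden h₁ h₂ P x * γ (h₂ * P)
    rcases eq_or_lt_of_le hx.1 with h | h
    · rw [← h, hk10]
    · have h2 : 1 - 1 / Dden h₁ h₂ P 0 * γ (h₂ * P)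
          < 1 - 1 / Dden h₁ h₂ P x * γ (h₂ * P) :=
        k1_mono hh hh₂ hP (Set.left_mem_Icc.2 hP.le) hx h
      linarith
  · show 1 - 1 / Dden h₁ h₂ P x * γ (h₂ * P) < 1
    have : 0 < 1 / Dden h₁ h₂ P x * γ (h₂ * P) :=
      mul_pos (one_div_pos.2 hD) hC₂
    linarith
  · show (0:ℝ) < (1 / h₁ + x) / (1 / h₂ + x) / Dden h₁ h₂ P x * γ (h₁ * P)
    exact mul_pos (div_pos (gfun_pos hh₂ hh₁ hx.1) hD) hC₁
  · show (1 / h₁ + x) / (1 / h₂ + x) / Dden h₁ h₂ P x * γ (h₁ * P) ≤ 1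
    rcases eq_or_lt_of_le hx.2 with h | h
    · rw [h, hk2P]
    · have h2 : (1 / h₁ + x) / (1 / h₂ + x) / Dden h₁ h₂ P x * γ (h₁ * P)
          < (1 / h₁ + P) / (1 / h₂ + P) / Dden h₁ h₂ P P * γ (h₁ * P) :=
        k2_mono hh hh₂ hP hx (Set.right_mem_Icc.2 hP.le) h
      linarith
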